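/- arXiv:1904.04513 — 2 statements merged into one kernel-verified Lean document; each statement's English description precedes it below -/
import Mathlib

section
/- For every n and every σ with 3 ≤ σ ≤ n − 3, there exists a forward trie T_f with n nodes over an alphabet of size σ + 1 whose DAWG has at least σ(n − σ − 2) edges; in particular, choosing σ = Θ(n) gives a forward trie whose DAWG has Ω(n²) edges. -/
/-- A rooted labeled tree on `n` nodes: node `0` is the root, every non-root
node `v` has a parent with smaller index, and `label v` is the character on
the edge between `v` and its parent. -/
structure LTree (n : ℕ) (A : Type*) where
  parent : Fin n → Fin n
  label : Fin n → A
  hp : ∀ v : Fin n, v.val ≠ 0 → (parent v).val < v.val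

namespace LTree

variable {n : ℕ} {A : Type*}

/-- The string spelled by the path from node `v` up to the root
(read in the leaf-to-root direction). -/
def strUp (T : LTree n A) (v : Fin n) : List A :=
  if h : v.val = 0 then []
  else T.label v :: T.strUp (T.parent v)
termination_by v.val
decreasing_by exact T.hp v h

/-- Substrings of the backward trie: strings spelled by upward paths from a
node to one of its ancestors (prefixes of the upward root-paths). -/
def SubstrU (T : LTree n A) : Set (List A) :=
  { s | ∃ (v : Fin n) (m : ℕ), s = (T.strUp v).take m }

/-- Substrings of the forward trie: strings spelled by downward paths from a
node to one of its descendants. -/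
def SubstrD (T : LTree n A) : Set (List A) :=
  { s | ∃ (v : Fin n) (m : ℕ), s = ((T.strUp v).take m).reverse }

/-- A node is a leaf if no (non-root) node has it as parent. -/
def isLeaf (T : LTree n A) (v : Fin n) : Prop :=
  ∀ u : Fin n, u.val ≠ 0 → T.parent u ≠ v

/-- Suffixes of the forward trie: strings spelled by downward paths from any
node to a leaf below it. -/
def SuffixF (T : LTree n A) : Set (List A) :=
  { s | ∃ v : Fin n, T.isLeaf v ∧ ∃ m : ℕ, s = ((T.strUp v).take m).reverse }

/-- Suffixes of the backward trie: strings spelled by the paths from any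
non-root node up to the root. -/
def SuffixB (T : LTree n A) : Set (List A) :=
  { s | ∃ v : Fin n, v.val ≠ 0 ∧ s = T.strUp v }

/-- The trie condition: out-going edges of each node (equivalently, edges to
the children of each node) carry mutually distinct characters. -/
def isTrie (T : LTree n A) : Prop :=
  ∀ u v : Fin n, u.val ≠ 0 → v.val ≠ 0 →
    T.parent u = T.parent v → T.label u = T.label v → u = v

/-- `X` is right-maximal on the forward trie: it has two distinct right
extensions, or an occurrence ending at a leaf. -/
def rightMaximalF (T : LTree n A) (X : List A) : Prop :=
  (∃ a b : A, a ≠ b ∧ X ++ [a] ∈ T.SubstrD ∧ X ++ [b] ∈ T.SubstrD) ∨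
  (∃ v : Fin n, T.isLeaf v ∧ ∃ m : ℕ, X = ((T.strUp v).take m).reverse)

/-- `X` is left-maximal on the forward trie: it has two distinct left
extensions, or an occurrence beginning at the root. -/
def leftMaximalF (T : LTree n A) (X : List A) : Prop :=
  (∃ a b : A, a ≠ b ∧ (a :: X) ∈ T.SubstrD ∧ (b :: X) ∈ T.SubstrD) ∨
  (∃ v : Fin n, X = (T.strUp v).reverse)

/-- `Y` is left-maximal on the backward trie: two distinct left extensions,
or an occurrence beginning at a leaf. -/
def leftMaximalB (T : LTree n A) (Y : List A) : Prop :=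
  (∃ a b : A, a ≠ b ∧ (a :: Y) ∈ T.SubstrU ∧ (b :: Y) ∈ T.SubstrU) ∨
  (∃ v : Fin n, T.isLeaf v ∧ ∃ m : ℕ, Y = (T.strUp v).take m)

/-- `Y` is right-maximal on the backward trie: two distinct right extensions,
or an occurrence ending at the root. -/
def rightMaximalB (T : LTree n A) (Y : List A) : Prop :=
  (∃ a b : A, a ≠ b ∧ Y ++ [a] ∈ T.SubstrU ∧ Y ++ [b] ∈ T.SubstrU) ∨
  (∃ v : Fin n, Y = T.strUp v)

end LTree

section Broom

open List

variable {n : ℕ} {A : Type*}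

theorem LTree.strUp_eq (T : LTree n A) (v : Fin n) :
    T.strUp v = if v.val = 0 then [] else T.label v :: T.strUp (T.parent v) := by
  rw [LTree.strUp]
  split <;> simp_all

theorem LTree.strUp_length (T : LTree n A) : ∀ v : Fin n, (T.strUp v).length ≤ v.val := by
  intro v
  rw [LTree.strUp_eq]
  split
  · simp
  · next h =>
    have ih := T.strUp_length (T.parent v)
    have := T.hp v h
    simp only [List.length_cons]
    omega
termination_by v => v.val
decreasing_by exact T.hp v ‹_›

theorem LTree.substrD_finite (T : LTree n A) : T.SubstrD.Finite := by
  have hsub : T.SubstrD ⊆ (fun p : Fin n × ℕ => ((T.strUp p.1).take p.2).reverse) ''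
      (Set.univ ×ˢ Set.Iic n) := by
    rintro s ⟨v, m, rfl⟩
    refine ⟨(v, min m (T.strUp v).length), ⟨trivial, ?_⟩, ?_⟩
    · have := T.strUp_length v
      have := v.isLt
      simp only [Set.mem_Iic]
      omega
    · rcases le_or_gt m (T.strUp v).length with h | h
      · simp [min_eq_left h]
      · simp only
        rw [min_eq_right h.le, List.take_of_length_le le_rfl,
          List.take_of_length_le h.le]
  exact Set.Finite.subset (Set.Finite.image _ ((Set.finite_univ).prod (Set.finite_Iic _)))
    hsub

variable (σ e : ℕ)

def broom : LTree (σ + e + 3) (Fin (σ + 1)) where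
  parent v := ⟨min (v.val - 1) (e + 2), by omega⟩
  label v := if v.val = 1 then 1 else if v.val ≤ e + 2 then 0
             else ⟨v.val - (e + 3), by have := v.isLt; omega⟩
  hp v hv := by simp only; omega

lemma broom_parent (v : Fin (σ + e + 3)) :
    ((broom σ e).parent v).val = min (v.val - 1) (e + 2) := rfl

lemma broom_label (v : Fin (σ + e + 3)) :
    (broom σ e).label v = if v.val = 1 then 1 else if v.val ≤ e + 2 then 0
             else ⟨v.val - (e + 3), by have := v.isLt; omega⟩ := rfl

lemma broom_strUp_path : ∀ k, (hk : k ≤ e + 1) →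
    (broom σ e).strUp ⟨k + 1, by omega⟩ = List.replicate k (0 : Fin (σ + 1)) ++ [1] := by
  intro k
  induction k with
  | zero =>
    intro hk
    rw [LTree.strUp_eq]
    have hpar : (broom σ e).parent ⟨1, by omega⟩ = ⟨0, by omega⟩ := by
      apply Fin.ext; simp [broom_parent]
    rw [hpar, LTree.strUp_eq]
    simp [broom_label]
  | succ k ih =>
    intro hk
    rw [LTree.strUp_eq]
    have hpar : (broom σ e).parent ⟨k + 2, by omega⟩ = ⟨k + 1, by omega⟩ := by
      apply Fin.ext; simp [broom_parent]; omega
    have hlab : (broom σ e).label ⟨k + 2, by omega⟩ = 0 := by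
      rw [broom_label]; simp; omega
    simp only [hpar, hlab, ih (by omega)]
    simp [List.replicate_succ]

lemma broom_strUp_leaf (i : ℕ) (hi : i < σ) :
    (broom σ e).strUp ⟨e + 3 + i, by omega⟩ =
      (⟨i, by omega⟩ : Fin (σ + 1)) :: (List.replicate (e + 1) (0 : Fin (σ + 1)) ++ [1]) := by
  rw [LTree.strUp_eq]
  have hpar : (broom σ e).parent ⟨e + 3 + i, by omega⟩ = ⟨(e + 1) + 1, by omega⟩ := by
    apply Fin.ext; simp [broom_parent]
  have hlab : (broom σ e).label ⟨e + 3 + i, by omega⟩ = ⟨i, by omega⟩ := by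
    rw [broom_label]; simp only [Fin.mk.injEq]
    split
    · omega
    · split
      · omega
      · simp
  rw [hpar, broom_strUp_path σ e (e+1) le_rfl]
  simp [hlab]

lemma broom_isTrie : (broom σ e).isTrie := by
  intro u v hu hv hpar hlab
  have hp : min (u.val - 1) (e + 2) = min (v.val - 1) (e + 2) := by
    have := congrArg Fin.val hpar; simpa [broom_parent] using this
  apply Fin.ext
  rcases le_or_gt u.val (e + 2) with h1 | h1 <;> rcases le_or_gt v.val (e + 2) with h2 | h2
  · omega
  · omega
  · omega
  · rw [broom_label, broom_label] at hlab
    rw [if_neg (by omega), if_neg (by omega), if_neg (by omega), if_neg (by omega)] at hlab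
    have := congrArg Fin.val hlab
    simp at this
    omega

end Broom


section BroomCount

variable (σ e : ℕ)

lemma broom_mem (v : Fin (σ + e + 3)) (m : ℕ) :
    (((broom σ e).strUp v).take m).reverse ∈ (broom σ e).SubstrD := ⟨v, m, rfl⟩

lemma broom_zero_ne_one (hσ : 3 ≤ σ) : (0 : Fin (σ + 1)) ≠ 1 := by
  intro h
  have := congrArg Fin.val h
  rw [Fin.val_zero, Fin.val_one', Nat.mod_eq_of_lt (by omega)] at this
  omega

lemma broom_F1 (k : ℕ) (hk : k ≤ e + 1) :
    List.replicate k (0 : Fin (σ + 1)) ∈ (broom σ e).SubstrD := by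
  have h := broom_mem σ e ⟨k + 1, by omega⟩ k
  rw [broom_strUp_path σ e k hk,
    List.take_append_of_le_length (by simp), List.take_replicate] at h
  simpa using h

lemma broom_F2 (k : ℕ) (hk : k ≤ e + 1) :
    (1 : Fin (σ + 1)) :: List.replicate k 0 ∈ (broom σ e).SubstrD := by
  have h := broom_mem σ e ⟨k + 1, by omega⟩ (k + 1)
  rw [broom_strUp_path σ e k hk, List.take_of_length_le (by simp)] at h
  simpa using h

lemma broom_F3 (k : ℕ) (hk : k ≤ e + 1) (i : ℕ) (hi : i < σ) :
    List.replicate k (0 : Fin (σ + 1)) ++ [⟨i, by omega⟩] ∈ (broom σ e).SubstrD := by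
  have h := broom_mem σ e ⟨e + 3 + i, by omega⟩ (k + 1)
  rw [broom_strUp_leaf σ e i hi, List.take_succ_cons ,
    List.take_append_of_le_length (by simpa using hk), List.take_replicate] at h
  rw [min_eq_left hk] at h
  simpa using h

lemma broom_F4 (i : ℕ) (hi : i < σ) :
    (1 : Fin (σ + 1)) :: (List.replicate (e + 1) 0 ++ [⟨i, by omega⟩]) ∈
      (broom σ e).SubstrD := by
  have h := broom_mem σ e ⟨e + 3 + i, by omega⟩ (e + 3)
  rw [broom_strUp_leaf σ e i hi, List.take_of_length_le (by simp)] at h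
  simpa using h

lemma broom_count (hσ : 3 ≤ σ) :
    σ * (e + 1) ≤
      {p : List (Fin (σ + 1)) × Fin (σ + 1) |
        p.1 ∈ (broom σ e).SubstrD ∧ (broom σ e).leftMaximalF p.1 ∧
        p.1 ++ [p.2] ∈ (broom σ e).SubstrD}.ncard := by
  set S := {p : List (Fin (σ + 1)) × Fin (σ + 1) |
        p.1 ∈ (broom σ e).SubstrD ∧ (broom σ e).leftMaximalF p.1 ∧
        p.1 ++ [p.2] ∈ (broom σ e).SubstrD} with hS
  have h01 := broom_zero_ne_one σ hσ
  set f : Fin (e + 1) × Fin σ → List (Fin (σ + 1)) × Fin (σ + 1) :=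
    fun p => (if p.1.val = e then (1 : Fin (σ + 1)) :: List.replicate (e + 1) 0
              else List.replicate (p.1.val + 1) 0,
              ⟨p.2.val, by have := p.2.isLt; omega⟩) with hf
  have hinj : Function.Injective f := by
    rintro ⟨k, i⟩ ⟨k', i'⟩ h
    have h1 : (if k.val = e then (1 : Fin (σ + 1)) :: List.replicate (e + 1) 0
        else List.replicate (k.val + 1) 0) =
        (if k'.val = e then (1 : Fin (σ + 1)) :: List.replicate (e + 1) 0
        else List.replicate (k'.val + 1) 0) := congrArg Prod.fst h
    have h2 : i.val = i'.val := congrArg (fun q => q.2.val) h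
    have hk : k = k' := by
      by_cases ha : k.val = e <;> by_cases hb : k'.val = e
      · exact Fin.ext (by omega)
      · rw [if_pos ha, if_neg hb] at h1
        have h3 : (1 : Fin (σ + 1)) ∈ List.replicate (k'.val + 1) (0 : Fin (σ + 1)) := by
          rw [← h1]; simp
        exact absurd (List.eq_of_mem_replicate h3).symm h01
      · rw [if_neg ha, if_pos hb] at h1
        have h3 : (1 : Fin (σ + 1)) ∈ List.replicate (k.val + 1) (0 : Fin (σ + 1)) := by
          rw [h1]; simp
        exact absurd (List.eq_of_mem_replicate h3).symm h01
      · rw [if_neg ha, if_neg hb] at h1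
        have := congrArg List.length h1
        simp only [List.length_replicate] at this
        exact Fin.ext (by omega)
    simp only [Prod.mk.injEq]
    exact ⟨hk, Fin.ext h2⟩
  have himg : f '' Set.univ ⊆ S := by
    rintro p ⟨⟨k, i⟩, -, rfl⟩
    have hsnd : (f (k, i)).2 = ⟨i.val, by have := i.isLt; omega⟩ := rfl
    simp only [hS, Set.mem_setOf_eq]
    by_cases hk : k.val = e
    · have hfst : (f (k, i)).1 = (1 : Fin (σ + 1)) :: List.replicate (e + 1) 0 := by
        simp [hf, hk]
      rw [hfst, hsnd]
      refine ⟨broom_F2 σ e (e + 1) le_rfl,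
        Or.inr ⟨⟨(e + 1) + 1, by omega⟩, by rw [broom_strUp_path σ e (e + 1) le_rfl]; simp⟩,
        ?_⟩
      simpa using broom_F4 σ e i.val i.isLt
    · have hfst : (f (k, i)).1 = List.replicate (k.val + 1) (0 : Fin (σ + 1)) := by
        simp [hf, hk]
      have hke : k.val + 1 ≤ e := by have := k.isLt; omega
      rw [hfst, hsnd]
      refine ⟨broom_F1 σ e (k.val + 1) (by omega),
        Or.inl ⟨0, 1, h01, ?_, broom_F2 σ e (k.val + 1) (by omega)⟩,
        ?_⟩
      · have := broom_F1 σ e (k.val + 2) (by omega)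
        rw [List.replicate_succ] at this
        exact this
      · exact broom_F3 σ e (k.val + 1) (by omega) i.val i.isLt
  have hfin : S.Finite := by
    apply Set.Finite.subset (((broom σ e).substrD_finite).prod Set.finite_univ)
    rintro ⟨X, c⟩ ⟨h1, -, -⟩
    exact ⟨h1, trivial⟩
  calc σ * (e + 1) = (f '' Set.univ).ncard := by
        rw [Set.ncard_image_of_injective _ hinj, Set.ncard_univ]
        simp [Nat.card_eq_fintype_card]
        ring
    _ ≤ S.ncard := Set.ncard_le_ncard himg hfin

end BroomCount


/-- for every `n` and `σ` with `3 ≤ σ ≤ n - 3`, there is a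
forward trie with `n` nodes over an alphabet of size `σ + 1` (the broom:
a path of `a`-edges ending in `σ` distinctly labeled edges) whose DAWG has at
least `σ(n - σ - 2)` edges; the edges of `DAWG(T_f)` out of a node are the
pairs `(X, c)` where `X` is the longest (left-maximal) member of the node's
class and `X ++ [c] ∈ Substr(T_f)`. Choosing `σ = Θ(n)` gives `Ω(n²)` edges. -/
theorem stmt10 :
    ∀ n σ : ℕ, 3 ≤ σ → σ ≤ n - 3 →
      ∃ T : LTree n (Fin (σ + 1)), T.isTrie ∧
        σ * (n - σ - 2) ≤
          {p : List (Fin (σ + 1)) × Fin (σ + 1) |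
            p.1 ∈ T.SubstrD ∧ T.leftMaximalF p.1 ∧
            p.1 ++ [p.2] ∈ T.SubstrD}.ncard := by
  intro n σ hσ hn
  obtain ⟨e, rfl⟩ : ∃ e, n = σ + e + 3 := ⟨n - σ - 3, by omega⟩
  refine ⟨broom σ e, broom_isTrie σ e, ?_⟩
  have hsub : σ + e + 3 - σ - 2 = e + 1 := by omega
  rw [hsub]
  exact broom_count σ e hσ
end

section
/- For any backward trie T_b with n ≥ 3 nodes, the CDAWG of T_b has at most 2n − 3 nodes and at most 2n − 4 edges, independently of the alphabet size. -/
namespace LTree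

variable {n : ℕ} {A : Type*}

lemma strUp_zero (T : LTree n A) (v : Fin n) (h : v.val = 0) : T.strUp v = [] := by
  rw [strUp, dif_pos h]

lemma strUp_cons (T : LTree n A) (v : Fin n) (h : v.val ≠ 0) :
    T.strUp v = T.label v :: T.strUp (T.parent v) := by
  rw [strUp, dif_neg h]

lemma strUp_length_le (T : LTree n A) (v : Fin n) : (T.strUp v).length ≤ v.val := by
  by_cases h : v.val = 0
  · rw [T.strUp_zero v h]
    simp [h]
  · rw [T.strUp_cons v h]
    have h1 := T.strUp_length_le (T.parent v)
    have h2 := T.hp v h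
    simp only [List.length_cons]
    omega
termination_by v.val
decreasing_by exact T.hp v h

lemma take_mem_substrU (T : LTree n A) (v : Fin n) (m : ℕ) :
    (T.strUp v).take m ∈ T.SubstrU := ⟨v, m, rfl⟩

lemma strUp_mem_substrU (T : LTree n A) (v : Fin n) : T.strUp v ∈ T.SubstrU :=
  ⟨v, (T.strUp v).length, List.take_length.symm⟩

lemma substrU_finite (T : LTree n A) : T.SubstrU.Finite := by
  have hsub : T.SubstrU ⊆ (fun p : Fin n × ℕ => (T.strUp p.1).take p.2) '' (Set.univ ×ˢ Set.Iic n) := by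
    rintro Y ⟨v, m, rfl⟩
    by_cases h : m ≤ n
    · exact ⟨(v, m), ⟨trivial, h⟩, rfl⟩
    · refine ⟨(v, n), ⟨trivial, le_refl n⟩, ?_⟩
      have h1 := T.strUp_length_le v
      have h2 : v.val < n := v.isLt
      simp only
      rw [List.take_of_length_le (by omega), List.take_of_length_le (by omega)]
  exact ((Set.finite_univ.prod (Set.finite_Iic n)).image _).subset hsub

lemma substrU_prefix_closed (T : LTree n A) :
    ∀ Y ∈ T.SubstrU, ∀ Z : List A, Z <+: Y → Z ∈ T.SubstrU := by
  rintro Y ⟨v, m, rfl⟩ Z hZ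
  rw [List.prefix_iff_eq_take] at hZ
  refine ⟨v, min Z.length m, ?_⟩
  conv_lhs => rw [hZ]
  rw [List.take_take]

lemma maximal_eq_strUp (T : LTree n A) {Y : List A} (hY : Y ∈ T.SubstrU)
    (hmax : ∀ a : A, Y ++ [a] ∉ T.SubstrU) : ∃ v : Fin n, Y = T.strUp v := by
  obtain ⟨v, m, rfl⟩ := hY
  refine ⟨v, ?_⟩
  by_cases h : (T.strUp v).length ≤ m
  · rw [List.take_of_length_le h]
  · push_neg at h
    exfalso
    apply hmax ((T.strUp v).get ⟨m, h⟩)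
    refine ⟨v, m + 1, ?_⟩
    rw [List.take_succ]
    congr 1
    simp [List.getElem?_eq_getElem h]

lemma rightMaximalB_strUp (T : LTree n A) (v : Fin n) : T.rightMaximalB (T.strUp v) :=
  Or.inr ⟨v, rfl⟩

lemma strUp_replicate (T : LTree n A) (a : A)
    (hall : ∀ u : Fin n, u.val ≠ 0 → T.label u = a) (v : Fin n) :
    T.strUp v = List.replicate (T.strUp v).length a := by
  by_cases h : v.val = 0
  · rw [T.strUp_zero v h]
    rfl
  · have ih := T.strUp_replicate a hall (T.parent v)
    rw [T.strUp_cons v h]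
    simp only [List.length_cons, List.replicate_succ]
    rw [hall v h]
    congr 1
termination_by v.val
decreasing_by exact T.hp v h

end LTree
lemma key_count {A : Type*} {P : Set (List A)} (hfin : P.Finite)
    (hpref : ∀ Y ∈ P, ∀ Z : List A, Z <+: Y → Z ∈ P)
    (hnilP : ([] : List A) ∈ P) :
    {Y | Y ∈ P ∧ ∃ a b : A, a ≠ b ∧ Y ++ [a] ∈ P ∧ Y ++ [b] ∈ P}.ncard + 1
      ≤ {Y | Y ∈ P ∧ ∀ a : A, Y ++ [a] ∉ P}.ncard := by
  classical
  set Pf := hfin.toFinset with hPfdef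
  have hmem : ∀ Y : List A, Y ∈ Pf ↔ Y ∈ P := fun Y => hfin.mem_toFinset
  set Brf := Pf.filter (fun Y => ∃ a b : A, a ≠ b ∧ Y ++ [a] ∈ P ∧ Y ++ [b] ∈ P) with hBrf
  set Maxf := Pf.filter (fun Y => ∀ a : A, Y ++ [a] ∉ P) with hMaxf
  have e1 : {Y | Y ∈ P ∧ ∃ a b : A, a ≠ b ∧ Y ++ [a] ∈ P ∧ Y ++ [b] ∈ P}.ncard = Brf.card := by
    rw [← Set.ncard_coe_finset]
    congr 1
    ext Y
    simp [hBrf, hmem, Set.mem_setOf_eq]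
  have e2 : {Y | Y ∈ P ∧ ∀ a : A, Y ++ [a] ∉ P}.ncard = Maxf.card := by
    rw [← Set.ncard_coe_finset]
    congr 1
    ext Y
    simp [hMaxf, hmem, Set.mem_setOf_eq]
  set s := Pf.filter (fun Z => Z ≠ []) with hs
  have hmap : ∀ Z ∈ s, Z.dropLast ∈ Pf := by
    intro Z hZ
    rw [hmem]
    have hZP : Z ∈ P := (hmem Z).1 (Finset.mem_filter.1 hZ).1
    exact hpref Z hZP _ (List.dropLast_prefix Z)
  have hsum := Finset.card_eq_sum_card_fiberwise hmap
  have hpoint : ∀ Y ∈ Pf \ Maxf,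
      (if (∃ a b : A, a ≠ b ∧ Y ++ [a] ∈ P ∧ Y ++ [b] ∈ P) then 2 else 1)
        ≤ (s.filter (fun Z => Z.dropLast = Y)).card := by
    intro Y hY
    rw [Finset.mem_sdiff] at hY
    obtain ⟨hYPf, hYnmax⟩ := hY
    split
    · rename_i hbr
      obtain ⟨a, b, hab, ha, hb⟩ := hbr
      have h2 : {Y ++ [a], Y ++ [b]} ⊆ s.filter (fun Z => Z.dropLast = Y) := by
        intro Z hZ
        simp only [Finset.mem_insert, Finset.mem_singleton] at hZ
        rcases hZ with rfl | rfl <;>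
          simp [hs, Finset.mem_filter, hmem, ha, hb, List.dropLast_concat]
      calc (2 : ℕ) = ({Y ++ [a], Y ++ [b]} : Finset (List A)).card := by
            rw [Finset.card_insert_of_notMem (by simp [hab]), Finset.card_singleton]
        _ ≤ _ := Finset.card_le_card h2
    · have hex : ∃ a : A, Y ++ [a] ∈ P := by
        by_contra hno
        push_neg at hno
        exact hYnmax (by rw [hMaxf, Finset.mem_filter]; exact ⟨hYPf, hno⟩)
      obtain ⟨a, ha⟩ := hex
      have : (s.filter (fun Z => Z.dropLast = Y)).Nonempty := by
        refine ⟨Y ++ [a], ?_⟩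
        simp [hs, Finset.mem_filter, hmem, ha, List.dropLast_concat]
      exact this.card_pos
  have hsub : Brf ⊆ Pf \ Maxf := by
    intro Y hY
    rw [hBrf, Finset.mem_filter] at hY
    obtain ⟨h1, a, b, hab, ha, hb⟩ := hY
    rw [Finset.mem_sdiff]
    refine ⟨h1, ?_⟩
    rw [hMaxf, Finset.mem_filter]
    push_neg
    intro _
    exact ⟨a, ha⟩
  have hineq1 : ∑ Y ∈ Pf \ Maxf, (if (∃ a b : A, a ≠ b ∧ Y ++ [a] ∈ P ∧ Y ++ [b] ∈ P) then 2 else 1)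
      ≤ ∑ Y ∈ Pf \ Maxf, (s.filter (fun Z => Z.dropLast = Y)).card :=
    Finset.sum_le_sum hpoint
  have hineq2 : ∑ Y ∈ Pf \ Maxf, (s.filter (fun Z => Z.dropLast = Y)).card ≤ s.card := by
    rw [hsum]
    exact Finset.sum_le_sum_of_subset Finset.sdiff_subset
  have hsplit : ∑ Y ∈ Pf \ Maxf, (if (∃ a b : A, a ≠ b ∧ Y ++ [a] ∈ P ∧ Y ++ [b] ∈ P) then 2 else 1)
      = (Pf \ Maxf).card + Brf.card := by
    have hre : ∀ Y : List A, (if (∃ a b : A, a ≠ b ∧ Y ++ [a] ∈ P ∧ Y ++ [b] ∈ P) then (2:ℕ) else 1)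
        = 1 + (if (∃ a b : A, a ≠ b ∧ Y ++ [a] ∈ P ∧ Y ++ [b] ∈ P) then 1 else 0) := by
      intro Y; split <;> rfl
    rw [Finset.sum_congr rfl (fun Y _ => hre Y), Finset.sum_add_distrib, Finset.sum_const,
      smul_eq_mul, mul_one]
    have hBreq : (Pf \ Maxf).filter (fun Y => ∃ a b : A, a ≠ b ∧ Y ++ [a] ∈ P ∧ Y ++ [b] ∈ P) = Brf := by
      ext Y
      simp only [Finset.mem_filter, Finset.mem_sdiff, hBrf]
      constructor
      · rintro ⟨⟨h1, _⟩, h3⟩; exact ⟨h1, h3⟩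
      · rintro ⟨h1, h3⟩
        refine ⟨⟨h1, ?_⟩, h3⟩
        rw [hMaxf, Finset.mem_filter]
        push_neg
        intro _
        obtain ⟨a, b, hab, ha, hb⟩ := h3
        exact ⟨a, ha⟩
    rw [← hBreq, Finset.card_filter]
  have hMaxne : Maxf.Nonempty := by
    obtain ⟨Y, hYPf, hYmax⟩ := Finset.exists_max_image Pf List.length ⟨[], (hmem _).2 hnilP⟩
    refine ⟨Y, ?_⟩
    rw [hMaxf, Finset.mem_filter]
    refine ⟨hYPf, fun a ha => ?_⟩
    have := hYmax (Y ++ [a]) ((hmem _).2 ha)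
    simp at this
  have hcard1 : s.card = Pf.card - 1 := by
    rw [hs, Finset.filter_ne', Finset.card_erase_of_mem ((hmem _).2 hnilP)]
  have hcard2 : (Pf \ Maxf).card = Pf.card - Maxf.card :=
    Finset.card_sdiff_of_subset (Finset.filter_subset _ _)
  have h3 : Maxf.card ≤ Pf.card := Finset.card_le_card (Finset.filter_subset _ _)
  have h4 : 1 ≤ Maxf.card := hMaxne.card_pos
  rw [e1, e2]
  omega

/-- for any backward trie with `n ≥ 3` nodes, the CDAWG of `T_b`
has at most `2n - 3` nodes (the maximal substrings of `T_b`, i.e. the longest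
members of the equivalence classes) and at most `2n - 4` edges, independently
of the alphabet size. -/
theorem stmt13 {n : ℕ} {A : Type*} (T : LTree n A) (hn : 3 ≤ n) :
    {Y | Y ∈ T.SubstrU ∧ T.leftMaximalB Y ∧ T.rightMaximalB Y}.ncard ≤ 2 * n - 3 ∧
    {p : List A × A | p.1 ∈ T.SubstrU ∧ T.leftMaximalB p.1 ∧
        T.rightMaximalB p.1 ∧ p.1 ++ [p.2] ∈ T.SubstrU}.ncard ≤ 2 * n - 4 := by
  classical
  have hfin := T.substrU_finite
  have h0pos : 0 < n := by omega
  set v0 : Fin n := ⟨0, h0pos⟩ with hv0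
  have hv00 : T.strUp v0 = [] := T.strUp_zero v0 rfl
  have hnilU : ([] : List A) ∈ T.SubstrU := by
    rw [← hv00]; exact T.strUp_mem_substrU v0
  set R : Set (List A) := {Y | Y ∈ T.SubstrU ∧ T.rightMaximalB Y} with hR
  have hRfin : R.Finite := hfin.subset (fun Y hY => hY.1)
  have hnilR : ([] : List A) ∈ R := ⟨hnilU, Or.inr ⟨v0, hv00.symm⟩⟩
  have hrange : (Set.range T.strUp).ncard ≤ n := by
    rw [← Set.image_univ]
    calc (T.strUp '' Set.univ).ncard ≤ (Set.univ : Set (Fin n)).ncard :=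
          Set.ncard_image_le Set.finite_univ
      _ = n := by simp [Set.ncard_univ]
  have hRcard : R.ncard ≤ 2 * n - 3 := by
    by_cases h0 : ∃ a b : A, a ≠ b ∧ [a] ∈ T.SubstrU ∧ [b] ∈ T.SubstrU
    · set Br := {Y | Y ∈ T.SubstrU ∧ ∃ a b : A, a ≠ b ∧ Y ++ [a] ∈ T.SubstrU ∧ Y ++ [b] ∈ T.SubstrU}
        with hBr
      set Mx := {Y | Y ∈ T.SubstrU ∧ ∀ a : A, Y ++ [a] ∉ T.SubstrU} with hMx
      have hBrfin : Br.Finite := hfin.subset fun Y hY => hY.1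
      have hkey : Br.ncard + 1 ≤ Mx.ncard :=
        key_count hfin T.substrU_prefix_closed hnilU
      have hMxcard : Mx.ncard ≤ n - 1 := by
        have hsub : Mx ⊆ (Set.range T.strUp) \ {[]} := by
          rintro Y ⟨hY, hmax⟩
          obtain ⟨v, rfl⟩ := T.maximal_eq_strUp hY hmax
          refine ⟨Set.mem_range_self v, ?_⟩
          intro hnil
          simp only [Set.mem_singleton_iff] at hnil
          obtain ⟨a, b, hab, ha, hb⟩ := h0
          exact hmax a (by rw [hnil]; simpa using ha)
        have h1 : Mx.ncard ≤ ((Set.range T.strUp) \ {[]}).ncard :=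
          Set.ncard_le_ncard hsub ((Set.finite_range _).diff)
        have h2 : ((Set.range T.strUp) \ {[]}).ncard = (Set.range T.strUp).ncard - 1 :=
          Set.ncard_diff_singleton_of_mem ⟨v0, hv00⟩
        omega
      have hnilBr : ([] : List A) ∈ Br := by
        refine ⟨hnilU, ?_⟩
        obtain ⟨a, b, hab, ha, hb⟩ := h0
        exact ⟨a, b, hab, by simpa using ha, by simpa using hb⟩
      have hRsub : R ⊆ Set.range T.strUp ∪ (Br \ {[]}) := by
        rintro Y ⟨hYU, hrm⟩
        rcases hrm with hbr | ⟨v, rfl⟩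
        · by_cases hY0 : Y = []
          · subst hY0
            exact Or.inl ⟨v0, hv00⟩
          · exact Or.inr ⟨⟨hYU, hbr⟩, hY0⟩
        · exact Or.inl ⟨v, rfl⟩
      have hBr' : (Br \ {[]}).ncard = Br.ncard - 1 :=
        Set.ncard_diff_singleton_of_mem hnilBr
      have h1 : R.ncard ≤ (Set.range T.strUp).ncard + (Br \ {[]}).ncard :=
        le_trans (Set.ncard_le_ncard hRsub ((Set.finite_range _).union (hBrfin.diff)))
          (Set.ncard_union_le _ _)
      omega
    · push_neg at h0
      have h1pos : (1 : ℕ) < n := by omega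
      set v1 : Fin n := ⟨1, h1pos⟩ with hv1
      set a0 := T.label v1 with ha0
      have hsing : ∀ u : Fin n, u.val ≠ 0 → [T.label u] ∈ T.SubstrU := by
        intro u hu
        refine ⟨u, 1, ?_⟩
        rw [T.strUp_cons u hu]
        rfl
      have ha0mem : [a0] ∈ T.SubstrU := hsing v1 (by simp [hv1])
      have hall : ∀ u : Fin n, u.val ≠ 0 → T.label u = a0 := by
        intro u hu
        by_contra hne
        exact (h0 (T.label u) a0 hne (hsing u hu)) ha0mem
      have hrep := T.strUp_replicate a0 hall
      have hsub : T.SubstrU ⊆ ↑((Finset.range n).image fun k => List.replicate k a0) := by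
        rintro Y ⟨v, m, rfl⟩
        rw [hrep v, List.take_replicate]
        simp only [Finset.coe_image, Set.mem_image, Finset.mem_coe, Finset.mem_range]
        refine ⟨min m (T.strUp v).length, ?_, rfl⟩
        have hl := T.strUp_length_le v
        have hv := v.isLt
        omega
      have h2 : R.ncard ≤ n := by
        calc R.ncard ≤ T.SubstrU.ncard := Set.ncard_le_ncard (fun Y hY => hY.1) hfin
          _ ≤ (↑((Finset.range n).image fun k => List.replicate k a0) : Set (List A)).ncard :=
              Set.ncard_le_ncard hsub (Finset.finite_toSet _)
          _ = ((Finset.range n).image fun k => List.replicate k a0).card :=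
              Set.ncard_coe_finset _
          _ ≤ (Finset.range n).card := Finset.card_image_le
          _ = n := Finset.card_range _
      omega
  constructor
  · exact le_trans
      (Set.ncard_le_ncard (fun Y hY => ⟨hY.1, hY.2.2⟩ : _) hRfin) hRcard
  · set E := {p : List A × A | p.1 ∈ T.SubstrU ∧ T.leftMaximalB p.1 ∧
        T.rightMaximalB p.1 ∧ p.1 ++ [p.2] ∈ T.SubstrU} with hE
    have hex : ∀ p : List A × A, p ∈ E →
        ∃ Z, (Z ∈ R ∧ p.1 ++ [p.2] <+: Z) ∧
          ∀ Z', Z' ∈ R ∧ p.1 ++ [p.2] <+: Z' → Z.length ≤ Z'.length := by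
      intro p hp
      have hne' : {Z | Z ∈ R ∧ p.1 ++ [p.2] <+: Z}.Nonempty := by
        obtain ⟨v, m, hm⟩ := hp.2.2.2
        refine ⟨T.strUp v, ⟨T.strUp_mem_substrU v, T.rightMaximalB_strUp v⟩, ?_⟩
        rw [hm]
        exact List.take_prefix m _
      obtain ⟨Z, hZ, hmin⟩ := Set.exists_min_image _ List.length
        (hRfin.subset (fun Z hZ => hZ.1)) hne'
      exact ⟨Z, hZ, fun Z' hZ' => hmin Z' hZ'⟩
    choose! f hf1 hf2 using hex
    have hmapsto : ∀ p ∈ E, f p ∈ R \ {[]} := by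
      intro p hp
      obtain ⟨hfR, hpre⟩ := hf1 p hp
      refine ⟨hfR, ?_⟩
      intro hnil
      simp only [Set.mem_singleton_iff] at hnil
      rw [hnil] at hpre
      have := hpre.length_le
      simp at this
    have hinj : Set.InjOn f E := by
      intro p hp q hq hfpq
      obtain ⟨hfRp, hprep⟩ := hf1 p hp
      obtain ⟨hfRq, hpreq⟩ := hf1 q hq
      rw [hfpq] at hprep
      have hpR : p.1 ∈ R := ⟨hp.1, hp.2.2.1⟩
      have hqR : q.1 ∈ R := ⟨hq.1, hq.2.2.1⟩
      have hp1Z : p.1 <+: f q := (List.prefix_append p.1 [p.2]).trans hprep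
      have hq1Z : q.1 <+: f q := (List.prefix_append q.1 [q.2]).trans hpreq
      have hlenp : p.1.length + 1 ≤ (f q).length := by
        have := hprep.length_le
        simpa using this
      have hlenq : q.1.length + 1 ≤ (f q).length := by
        have := hpreq.length_le
        simpa using this
      have hlen : p.1.length = q.1.length := by
        by_contra hne
        rcases Nat.lt_or_ge p.1.length q.1.length with hlt | hge
        · have h1 : p.1 ++ [p.2] <+: q.1 :=
            List.prefix_of_prefix_length_le hprep hq1Z (by simp; omega)
          have h2 := hf2 p hp q.1 ⟨hqR, h1⟩
          rw [hfpq] at h2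
          omega
        · have hlt : q.1.length < p.1.length := by omega
          have h1 : q.1 ++ [q.2] <+: p.1 :=
            List.prefix_of_prefix_length_le hpreq hp1Z (by simp; omega)
          have h2 := hf2 q hq p.1 ⟨hpR, h1⟩
          omega
      have heq1 : p.1 = q.1 := by
        have h1 : p.1 <+: q.1 := List.prefix_of_prefix_length_le hp1Z hq1Z (le_of_eq hlen)
        exact List.IsPrefix.eq_of_length h1 hlen
      have heq2 : p.2 = q.2 := by
        have h1 : p.1 ++ [p.2] <+: q.1 ++ [q.2] :=
          List.prefix_of_prefix_length_le hprep hpreq (by simp [hlen])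
        have h2 : p.1 ++ [p.2] = q.1 ++ [q.2] :=
          List.IsPrefix.eq_of_length h1 (by simp [hlen])
        rw [heq1] at h2
        have := List.append_cancel_left h2
        simpa using this
      exact Prod.ext heq1 heq2
    have hEcard : E.ncard ≤ (R \ {[]}).ncard :=
      Set.ncard_le_ncard_of_injOn f hmapsto hinj (hRfin.diff)
    have hdiff : (R \ {[]}).ncard = R.ncard - 1 :=
      Set.ncard_diff_singleton_of_mem hnilR
    omega
end
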